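/- Let M be a finite metric space, m ≤ #M an integer, and λ > 0. Then 2·d_GH(λΔₘ, M) = min over all partitions D of M into m nonempty parts of max(diam D, λ - α(D), β(D) - λ), where diam D is the maximum diameter of a part, α(D) is the minimum over pairs of distinct parts of the infimum distance between them, and β(D) is the maximum over pairs of distinct parts of the supremum distance between them. -/

import Mathlib

open scoped Classical

/-- The simplex `λΔₘ`: `m` points with all nonzero distances equal to `lam`. -/
noncomputable def simplexMetric (m : ℕ) (lam : ℝ) (hl : 0 < lam) : MetricSpace (Fin m) where
  dist x y := if x = y then 0 else lam
  dist_self x := if_pos rfl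
  dist_comm x y := by
    by_cases h : x = y
    · simp [h]
    · simp [h, Ne.symm h]
  dist_triangle x y z := by
    by_cases hxz : x = z <;> by_cases hxy : x = y <;> by_cases hyz : y = z <;>
      simp_all <;> linarith
  eq_of_dist_eq_zero := by
    intro x y h
    by_cases hxy : x = y
    · exact hxy
    · simp only [if_neg hxy] at h; exact absurd h hl.ne'

/-- `P` is a partition of `X` into `m` nonempty parts. -/
def IsPartition {X : Type*} {m : ℕ} (P : Fin m → Set X) : Prop :=
  (∀ i, (P i).Nonempty) ∧ (Pairwise fun i j => Disjoint (P i) (P j)) ∧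
    (⋃ i, P i) = Set.univ

/-- `diam D`: the maximum of the diameters of the parts. -/
noncomputable def diamD {X : Type*} [MetricSpace X] {m : ℕ} (P : Fin m → Set X) : ℝ :=
  ⨆ i, Metric.diam (P i)

/-- `α(D)`: the minimum over pairs of distinct parts of the infimum distance between them. -/
noncomputable def alphaD {X : Type*} [MetricSpace X] {m : ℕ} (P : Fin m → Set X) : ℝ :=
  sInf {r : ℝ | ∃ i j, i ≠ j ∧ ∃ x ∈ P i, ∃ y ∈ P j, r = dist x y}

/-- `β(D)`: the maximum over pairs of distinct parts of the supremum distance between them. -/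
noncomputable def betaD {X : Type*} [MetricSpace X] {m : ℕ} (P : Fin m → Set X) : ℝ :=
  sSup {r : ℝ | ∃ i j, i ≠ j ∧ ∃ x ∈ P i, ∃ y ∈ P j, r = dist x y}

open Metric Set GromovHausdorff


lemma exists_surj_refine {M : Type*} [Fintype M] {m : ℕ} (hmM : m ≤ Fintype.card M)
    (f : M → Fin m) :
    ∃ g : M → Fin m, Function.Surjective g ∧ ∀ x y, g x = g y → f x = f y := by
  suffices H : ∀ k (f : M → Fin m), m - (Finset.univ.image f).card ≤ k →
      ∃ g : M → Fin m, Function.Surjective g ∧ ∀ x y, g x = g y → f x = f y from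
    H m f (Nat.sub_le _ _)
  intro k
  induction k with
  | zero =>
    intro f hf
    refine ⟨f, ?_, fun x y h => h⟩
    have hcard : (Finset.univ.image f).card = m := by
      have h1 : (Finset.univ.image f).card ≤ m := by
        simpa using Finset.card_le_card (Finset.subset_univ (Finset.univ.image f))
      omega
    have : Finset.univ.image f = Finset.univ :=
      Finset.eq_univ_of_card _ (by simpa using hcard)
    intro i
    have : i ∈ Finset.univ.image f := by rw [this]; exact Finset.mem_univ i
    obtain ⟨x, -, hx⟩ := Finset.mem_image.mp this
    exact ⟨x, hx⟩
  | succ k ih =>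
    intro f hf
    by_cases hsurj : Function.Surjective f
    · exact ⟨f, hsurj, fun x y h => h⟩
    · unfold Function.Surjective at hsurj
      push_neg at hsurj
      obtain ⟨i₀, hi₀⟩ := hsurj
      have hi₀' : i₀ ∉ Finset.univ.image f := by
        simp only [Finset.mem_image, Finset.mem_univ, true_and]
        rintro ⟨x, hx⟩; exact hi₀ x hx
      have hlt : (Finset.univ.image f).card < Fintype.card M := by
        have hne_univ : Finset.univ.image f ≠ Finset.univ := by
          intro h; rw [h] at hi₀'; exact hi₀' (Finset.mem_univ i₀)
        have h1 : (Finset.univ.image f).card < m := by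
          have := Finset.card_lt_card (Finset.ssubset_univ_iff.mpr hne_univ)
          simpa using this
        omega
      obtain ⟨x₁, -, x₂, -, hne, heq⟩ :=
        Finset.exists_ne_map_eq_of_card_lt_of_maps_to (s := (Finset.univ : Finset M))
          (t := Finset.univ.image f) (by simpa using hlt)
          (fun x _ => Finset.mem_image_of_mem f (Finset.mem_univ x))
      set f' := Function.update f x₁ i₀ with hf'
      have href : ∀ x y, f' x = f' y → f x = f y := by
        intro x y h
        by_cases hx : x = x₁ <;> by_cases hy : y = x₁
        · rw [hx, hy]
        · exfalso; apply hi₀ y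
          rw [hf', hx, Function.update_self, Function.update_of_ne hy] at h
          exact h.symm
        · exfalso; apply hi₀ x
          rw [hf', hy, Function.update_self, Function.update_of_ne hx] at h
          exact h
        · rwa [hf', Function.update_of_ne hx, Function.update_of_ne hy] at h
      have hsub : Finset.univ.image f ⊆ Finset.univ.image f' := by
        intro i hi
        obtain ⟨y, -, hy⟩ := Finset.mem_image.mp hi
        rcases eq_or_ne y x₁ with rfl | hyx
        · refine Finset.mem_image.mpr ⟨x₂, Finset.mem_univ _, ?_⟩
          rw [hf', Function.update_of_ne hne.symm, ← heq, hy]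
        · exact Finset.mem_image.mpr ⟨y, Finset.mem_univ _, by rw [hf', Function.update_of_ne hyx, hy]⟩
      have hmem : i₀ ∈ Finset.univ.image f' :=
        Finset.mem_image.mpr ⟨x₁, Finset.mem_univ _, by rw [hf', Function.update_self]⟩
      have hcardlt : (Finset.univ.image f).card < (Finset.univ.image f').card :=
        Finset.card_lt_card (Finset.ssubset_iff_of_subset hsub |>.mpr ⟨i₀, hmem, hi₀'⟩)
      obtain ⟨g, hg, hgf'⟩ := ih f' (by omega)
      exact ⟨g, hg, fun x y h => href x y (hgf' x y h)⟩

section facts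
variable {M : Type*} [MetricSpace M] [Fintype M] {m : ℕ}

lemma crossSet_bddAbove (P : Fin m → Set M) :
    BddAbove {r : ℝ | ∃ i j, i ≠ j ∧ ∃ x ∈ P i, ∃ y ∈ P j, r = dist x y} := by
  apply Set.Finite.bddAbove
  apply (Set.finite_range (fun q : M × M => dist q.1 q.2)).subset
  rintro r ⟨i, j, -, x, -, y, -, rfl⟩
  exact ⟨(x, y), rfl⟩

lemma crossSet_bddBelow (P : Fin m → Set M) :
    BddBelow {r : ℝ | ∃ i j, i ≠ j ∧ ∃ x ∈ P i, ∃ y ∈ P j, r = dist x y} := by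
  refine ⟨0, ?_⟩
  rintro r ⟨i, j, -, x, -, y, -, rfl⟩
  exact dist_nonneg

end facts

theorem gh_eq_aux {M : Type*} [MetricSpace M] [Fintype M] [Nonempty M]
    {m : ℕ} (hm : 2 ≤ m) (hmM : m ≤ Fintype.card M) {lam : ℝ} (hl : 0 < lam)
    [MetricSpace (Fin m)] [Nonempty (Fin m)]
    (hdist : ∀ i j : Fin m, dist i j = if i = j then 0 else lam) :
    2 * GromovHausdorff.ghDist (Fin m) M =
      sInf {r : ℝ | ∃ P : Fin m → Set M, IsPartition P ∧
        r = max (diamD P) (max (lam - alphaD P) (betaD P - lam))} := by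
  set d := GromovHausdorff.ghDist (Fin m) M with hd
  -- two distinct indices
  letI : TopologicalSpace (Fin m) := UniformSpace.toTopologicalSpace
  have hij0 : (⟨0, by omega⟩ : Fin m) ≠ (⟨1, by omega⟩ : Fin m) := by
    simp [Fin.ext_iff]
  ---------------------------------------------------------------
  -- UPPER BOUND: for every partition P, 2 * d ≤ max (...)
  ---------------------------------------------------------------
  have upper : ∀ P : Fin m → Set M, IsPartition P →
      2 * d ≤ max (diamD P) (max (lam - alphaD P) (betaD P - lam)) := by
    intro P hP
    set E := max (diamD P) (max (lam - alphaD P) (betaD P - lam)) with hE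
    have hex : ∀ x : M, ∃ i, x ∈ P i := by
      intro x
      have := hP.2.2
      rw [Set.eq_univ_iff_forall] at this
      exact Set.mem_iUnion.mp (this x)
    set p : M → Fin m := fun x => (hex x).choose with hp_def
    have hp : ∀ x, x ∈ P (p x) := fun x => (hex x).choose_spec
    have hpu : ∀ x i, x ∈ P i → p x = i := by
      intro x i hxi
      by_contra hne
      exact (hP.2.1 hne).ne_of_mem (hp x) hxi rfl
    have hbdd : BddAbove (Set.range fun i => Metric.diam (P i)) :=
      (Set.finite_range _).bddAbove
    have hdiam_le : ∀ i, Metric.diam (P i) ≤ diamD P := fun i => le_ciSup hbdd i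
    -- apply ghDist_le_of_approx_subsets
    have key : GromovHausdorff.ghDist M (Fin m) ≤ 0 + E / 2 + 0 := by
      apply ghDist_le_of_approx_subsets (s := (Set.univ : Set M))
        (Φ := fun x => p (x : M))
      · intro x; exact ⟨x, Set.mem_univ x, by simp⟩
      · intro i
        obtain ⟨x, hx⟩ := hP.1 i
        refine ⟨⟨x, Set.mem_univ x⟩, ?_⟩
        simp only [hpu x i hx]
        simp [hdist]
      · rintro ⟨x, -⟩ ⟨y, -⟩
        by_cases hxy : p x = p y
        · have h1 : dist (p x) (p y) = 0 := by rw [hdist, if_pos hxy]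
          have h2 : dist x y ≤ diamD P := by
            refine le_trans ?_ (hdiam_le (p x))
            exact Metric.dist_le_diam_of_mem (Set.toFinite _).isBounded (hp x)
              (by rw [hxy]; exact hp y)
          have h3 : Subtype.val (⟨x, trivial⟩ : (Set.univ : Set M)) = x := rfl
          rw [h1]
          calc |dist (⟨x, trivial⟩ : (Set.univ : Set M)) (⟨y, trivial⟩ : (Set.univ : Set M)) - 0|
              = dist x y := by rw [sub_zero, abs_of_nonneg dist_nonneg]; rfl
            _ ≤ diamD P := h2
            _ ≤ E := le_max_left _ _
        · have h1 : dist (p x) (p y) = lam := by rw [hdist, if_neg hxy]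
          have hmem : dist x y ∈ {r : ℝ | ∃ i j, i ≠ j ∧ ∃ x ∈ P i, ∃ y ∈ P j, r = dist x y} :=
            ⟨p x, p y, hxy, x, hp x, y, hp y, rfl⟩
          have ha : alphaD P ≤ dist x y := csInf_le (crossSet_bddBelow P) hmem
          have hb : dist x y ≤ betaD P := le_csSup (crossSet_bddAbove P) hmem
          rw [h1]
          have hxy' : dist (⟨x, trivial⟩ : (Set.univ : Set M)) (⟨y, trivial⟩ : (Set.univ : Set M))
              = dist x y := rfl
          rw [hxy']
          rw [abs_le]
          constructor
          · have : lam - dist x y ≤ lam - alphaD P := by linarith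
            have h4 : lam - alphaD P ≤ E := le_trans (le_max_left _ _) (le_max_right _ _)
            linarith
          · have : dist x y - lam ≤ betaD P - lam := by linarith
            have h4 : betaD P - lam ≤ E := le_trans (le_max_right _ _) (le_max_right _ _)
            linarith
    have hcomm : d = GromovHausdorff.ghDist M (Fin m) := by
      rw [hd]; exact dist_comm _ _
    rw [hcomm]; linarith
  ---------------------------------------------------------------
  -- LOWER BOUND: there is a partition Q with max (...) ≤ 2 * d
  ---------------------------------------------------------------
  obtain ⟨Φ, Ψ, hΦ, hΨ, heq⟩ := ghDist_eq_hausdorffDist (Fin m) M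
  have hfin : EMetric.hausdorffEdist (Set.range Φ) (Set.range Ψ) ≠ ⊤ :=
    hausdorffEdist_ne_top_of_nonempty_of_bounded (Set.range_nonempty _) (Set.range_nonempty _)
      (isCompact_range hΦ.continuous).isBounded (isCompact_range hΨ.continuous).isBounded
  have hd0 : 0 ≤ d := by rw [hd, heq]; exact hausdorffDist_nonneg
  have hF : ∀ x : M, ∃ i : Fin m, dist (Ψ x) (Φ i) ≤ d := by
    intro x
    have h1 : infDist (Ψ x) (Set.range Φ) ≤ hausdorffDist (Set.range Ψ) (Set.range Φ) :=
      infDist_le_hausdorffDist_of_mem (Set.mem_range_self x)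
        (by rw [EMetric.hausdorffEdist_comm]; exact hfin)
    obtain ⟨y, hy, hyd⟩ := (isCompact_range hΦ.continuous).exists_infDist_eq_dist
      (Set.range_nonempty _) (Ψ x)
    obtain ⟨i, rfl⟩ := hy
    refine ⟨i, ?_⟩
    rw [← hyd]
    rw [hausdorffDist_comm] at h1
    rw [hd, heq]
    exact h1
  have hG : ∀ i : Fin m, ∃ x : M, dist (Φ i) (Ψ x) ≤ d := by
    intro i
    have h1 : infDist (Φ i) (Set.range Ψ) ≤ hausdorffDist (Set.range Φ) (Set.range Ψ) :=
      infDist_le_hausdorffDist_of_mem (Set.mem_range_self i) hfin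
    obtain ⟨y, hy, hyd⟩ := (isCompact_range hΨ.continuous).exists_infDist_eq_dist
      (Set.range_nonempty _) (Φ i)
    obtain ⟨x, rfl⟩ := hy
    refine ⟨x, ?_⟩
    rw [← hyd, hd, heq]
    exact h1
  set f : M → Fin m := fun x => (hF x).choose with hf_def
  have hf : ∀ x, dist (Ψ x) (Φ (f x)) ≤ d := fun x => (hF x).choose_spec
  -- fact 1 : same fiber → close
  have fact1 : ∀ x y : M, f x = f y → dist x y ≤ 2 * d := by
    intro x y h
    have : dist x y = dist (Ψ x) (Ψ y) := (hΨ.dist_eq x y).symm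
    rw [this]
    calc dist (Ψ x) (Ψ y) ≤ dist (Ψ x) (Φ (f x)) + dist (Φ (f x)) (Ψ y) := dist_triangle _ _ _
      _ = dist (Ψ x) (Φ (f x)) + dist (Ψ y) (Φ (f y)) := by rw [h, dist_comm (Φ (f y))]
      _ ≤ d + d := add_le_add (hf x) (hf y)
      _ = 2 * d := by ring
  -- fact 2 : different fibers → distance near lam
  have fact2 : ∀ x y : M, f x ≠ f y → |lam - dist x y| ≤ 2 * d := by
    intro x y h
    have h1 : dist (Φ (f x)) (Φ (f y)) = lam := by
      rw [hΦ.dist_eq, hdist, if_neg h]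
    have h2 : dist (Ψ x) (Ψ y) = dist x y := hΨ.dist_eq x y
    have h3 := dist_dist_dist_le (Φ (f x)) (Φ (f y)) (Ψ x) (Ψ y)
    rw [Real.dist_eq, h1, h2] at h3
    have h4 : dist (Φ (f x)) (Ψ x) + dist (Φ (f y)) (Ψ y) ≤ 2 * d := by
      have := hf x; have := hf y
      rw [dist_comm (Φ (f x)), dist_comm (Φ (f y))]
      linarith
    linarith
  -- all distances bounded
  have hall : ∀ x y : M, dist x y ≤ lam + 2 * d := by
    intro x y
    by_cases h : f x = f y
    · have := fact1 x y h; linarith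
    · have := fact2 x y h; rw [abs_le] at this; linarith
  ---------------------------------------------------------------
  -- construct the partition Q
  ---------------------------------------------------------------
  have hQ : ∃ Q : Fin m → Set M, IsPartition Q ∧
      max (diamD Q) (max (lam - alphaD Q) (betaD Q - lam)) ≤ 2 * d := by
    by_cases hsurj : Function.Surjective f
    · -- f surjective : use fibers of f
      refine ⟨fun i => f ⁻¹' {i}, ⟨fun i => hsurj i, ?_, ?_⟩, ?_⟩
      · intro i j hij
        rw [Set.disjoint_left]
        rintro x (hx : f x = i) (hy : f x = j)
        exact hij (hx ▸ hy ▸ rfl)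
      · rw [Set.eq_univ_iff_forall]
        exact fun x => Set.mem_iUnion.mpr ⟨f x, rfl⟩
      · refine max_le ?_ (max_le ?_ ?_)
        · refine Real.iSup_le (fun i => ?_) (by linarith)
          refine Metric.diam_le_of_forall_dist_le (by linarith) ?_
          rintro x (hx : f x = i) y (hy : f y = i)
          exact fact1 x y (hx.trans hy.symm)
        · -- alpha bound
          have halpha : lam - 2 * d ≤ alphaD (fun i => f ⁻¹' {i}) := by
            refine le_csInf ?_ ?_
            · obtain ⟨x₀, hx₀⟩ := hsurj ⟨0, by omega⟩
              obtain ⟨y₀, hy₀⟩ := hsurj ⟨1, by omega⟩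
              exact ⟨dist x₀ y₀, ⟨0, by omega⟩, ⟨1, by omega⟩, hij0, x₀, hx₀, y₀, hy₀, rfl⟩
            · rintro r ⟨i, j, hij, x, (hx : f x = i), y, (hy : f y = j), rfl⟩
              have := fact2 x y (by rw [hx, hy]; exact hij)
              rw [abs_le] at this
              linarith [this.2]
          linarith
        · -- beta bound
          have hbeta : betaD (fun i => f ⁻¹' {i}) ≤ lam + 2 * d := by
            refine Real.sSup_le ?_ (by linarith)
            rintro r ⟨i, j, hij, x, hx, y, hy, rfl⟩
            exact hall x y
          linarith
    · -- f not surjective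
      have hlam : lam ≤ 2 * d := by
        rw [Function.Surjective] at hsurj
        push_neg at hsurj
        obtain ⟨i₀, hi₀⟩ := hsurj
        obtain ⟨x, hx⟩ := hG i₀
        have hne : f x ≠ i₀ := fun h => hi₀ x h
        have h1 : dist (Φ i₀) (Φ (f x)) = lam := by
          rw [hΦ.dist_eq, hdist, if_neg (Ne.symm hne)]
        calc lam = dist (Φ i₀) (Φ (f x)) := h1.symm
          _ ≤ dist (Φ i₀) (Ψ x) + dist (Ψ x) (Φ (f x)) := dist_triangle _ _ _
          _ ≤ d + d := add_le_add hx (hf x)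
          _ = 2 * d := by ring
      obtain ⟨g, hgsurj, hgf⟩ := exists_surj_refine hmM f
      refine ⟨fun i => g ⁻¹' {i}, ⟨fun i => hgsurj i, ?_, ?_⟩, ?_⟩
      · intro i j hij
        rw [Set.disjoint_left]
        rintro x (hx : g x = i) (hy : g x = j)
        exact hij (hx ▸ hy ▸ rfl)
      · rw [Set.eq_univ_iff_forall]
        exact fun x => Set.mem_iUnion.mpr ⟨g x, rfl⟩
      · refine max_le ?_ (max_le ?_ ?_)
        · refine Real.iSup_le (fun i => ?_) (by linarith)
          refine Metric.diam_le_of_forall_dist_le (by linarith) ?_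
          rintro x (hx : g x = i) y (hy : g y = i)
          exact fact1 x y (hgf x y (hx.trans hy.symm))
        · have halpha : (0:ℝ) ≤ alphaD (fun i => g ⁻¹' {i}) := by
            refine le_csInf ?_ ?_
            · obtain ⟨x₀, hx₀⟩ := hgsurj ⟨0, by omega⟩
              obtain ⟨y₀, hy₀⟩ := hgsurj ⟨1, by omega⟩
              exact ⟨dist x₀ y₀, ⟨0, by omega⟩, ⟨1, by omega⟩, hij0, x₀, hx₀, y₀, hy₀, rfl⟩
            · rintro r ⟨i, j, hij, x, hx, y, hy, rfl⟩
              exact dist_nonneg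
          linarith
        · have hbeta : betaD (fun i => g ⁻¹' {i}) ≤ lam + 2 * d := by
            refine Real.sSup_le ?_ (by linarith)
            rintro r ⟨i, j, hij, x, hx, y, hy, rfl⟩
            exact hall x y
          linarith
  obtain ⟨Q, hQpart, hQle⟩ := hQ
  ---------------------------------------------------------------
  -- combine
  ---------------------------------------------------------------
  set S := {r : ℝ | ∃ P : Fin m → Set M, IsPartition P ∧
    r = max (diamD P) (max (lam - alphaD P) (betaD P - lam))} with hS
  have hmemS : max (diamD Q) (max (lam - alphaD Q) (betaD Q - lam)) ∈ S := ⟨Q, hQpart, rfl⟩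
  have hSbdd : BddBelow S := by
    refine ⟨0, ?_⟩
    rintro r ⟨P, hP, rfl⟩
    refine le_trans ?_ (le_max_left _ _)
    exact Real.iSup_nonneg fun i => Metric.diam_nonneg
  refine le_antisymm ?_ ?_
  · refine le_csInf ⟨_, hmemS⟩ ?_
    rintro b ⟨P, hP, rfl⟩
    exact upper P hP
  · exact le_trans (csInf_le hSbdd hmemS) hQle

theorem stmt_10 {M : Type*} [MetricSpace M] [Fintype M] [Nonempty M]
    {m : ℕ} (hm : 2 ≤ m) (hmM : m ≤ Fintype.card M) {lam : ℝ} (hl : 0 < lam) :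
    2 * (letI := simplexMetric m lam hl
         haveI : Nonempty (Fin m) := Fin.pos_iff_nonempty.mp (by omega)
         GromovHausdorff.ghDist (Fin m) M) =
      sInf {r : ℝ | ∃ P : Fin m → Set M, IsPartition P ∧
        r = max (diamD P) (max (lam - alphaD P) (betaD P - lam))} := by
  letI := simplexMetric m lam hl
  haveI : Nonempty (Fin m) := Fin.pos_iff_nonempty.mp (by omega)
  exact gh_eq_aux hm hmM hl (fun i j => rfl)
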